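/- arXiv:cond-mat/0505665 — 4 statements merged into one kernel-verified Lean document; each statement's English description precedes it below -/
import Mathlib

section
/- For the stationary probability p_i(t) = N_i(t)/Z_u(t) with N_i(t) = (1 + ((u-1)/t) f_i^{m-1})^{1/(1-u)} and Z_u(t) = Σ_j N_j(t), the derivative satisfies ∂p_i/∂t = (p_i/t²)(f̂_i^{m-1} - Σ_j p_j f̂_j^{m-1}), where f̂_i^{m-1} = f_i^{m-1}/(1 + ((u-1)/t) f_i^{m-1}). -/
/-- For the stationary probability `p_i(t) = N_i(t)/Z_u(t)`, the
derivative satisfies `∂p_i/∂t = (p_i/t²)(f̂_i^{m-1} - Σ_j p_j f̂_j^{m-1})`. -/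
theorem deriv_stationary_prob {W : ℕ} (u t m : ℝ) (hu : u ≠ 1) (ht : 0 < t)
    (hm : 1 < m) (f : Fin W → ℝ) (hf : ∀ j, 0 ≤ f j)
    (hpos : ∀ j, 0 < 1 + ((u - 1) / t) * f j ^ (m - 1)) (i : Fin W) :
    let N : Fin W → ℝ → ℝ :=
      fun j s => (1 + ((u - 1) / s) * f j ^ (m - 1)) ^ (1 / (1 - u))
    let Z : ℝ → ℝ := fun s => ∑ j, N j s
    let p : Fin W → ℝ := fun j => N j t / Z t
    let fhat : Fin W → ℝ := fun j => f j ^ (m - 1) / (1 + ((u - 1) / t) * f j ^ (m - 1))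
    HasDerivAt (fun s : ℝ => N i s / Z s)
      (p i / t ^ 2 * (fhat i - ∑ j, p j * fhat j)) t := by
  intro N Z p fhat
  have ht' : t ≠ 0 := ht.ne'
  have hu1 : (1 : ℝ) - u ≠ 0 := sub_ne_zero.mpr (Ne.symm hu)
  have hNpos : ∀ j, 0 < N j t := fun j => Real.rpow_pos_of_pos (hpos j) _
  have hZpos : 0 < Z t :=
    Finset.sum_pos (fun j _ => hNpos j) ⟨i, Finset.mem_univ i⟩
  -- derivative of the inner function
  have hg : ∀ j, HasDerivAt (fun s : ℝ => 1 + ((u - 1) / s) * f j ^ (m - 1))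
      ((u - 1) * -(t ^ 2)⁻¹ * f j ^ (m - 1)) t := by
    intro j
    have h1 : HasDerivAt (fun s : ℝ => (u - 1) * s⁻¹ * f j ^ (m - 1))
        ((u - 1) * -(t ^ 2)⁻¹ * f j ^ (m - 1)) t :=
      (((hasDerivAt_inv ht').const_mul (u - 1)).mul_const (f j ^ (m - 1)))
    simpa [div_eq_mul_inv] using h1.const_add 1
  have hN : ∀ j, HasDerivAt (fun s => N j s) (N j t * fhat j / t ^ 2) t := by
    intro j
    have h2 := (hg j).rpow_const (p := 1 / (1 - u)) (Or.inl (hpos j).ne')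
    have hkey : (u - 1) * -(t ^ 2)⁻¹ * f j ^ (m - 1) * (1 / (1 - u)) *
        (1 + ((u - 1) / t) * f j ^ (m - 1)) ^ (1 / (1 - u) - 1)
        = N j t * fhat j / t ^ 2 := by
      rw [Real.rpow_sub (hpos j), Real.rpow_one]
      simp only [N, fhat]
      have e1 : (u - 1) * (1 / (1 - u)) = -1 := by field_simp; ring
      calc (u - 1) * -(t ^ 2)⁻¹ * f j ^ (m - 1) * (1 / (1 - u)) *
            ((1 + (u - 1) / t * f j ^ (m - 1)) ^ (1 / (1 - u)) /
              (1 + (u - 1) / t * f j ^ (m - 1)))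
          = ((u - 1) * (1 / (1 - u))) *
            (-(f j ^ (m - 1) *
              ((1 + (u - 1) / t * f j ^ (m - 1)) ^ (1 / (1 - u)) /
                (1 + (u - 1) / t * f j ^ (m - 1)))) / t ^ 2) := by ring
        _ = (1 + (u - 1) / t * f j ^ (m - 1)) ^ (1 / (1 - u)) *
            (f j ^ (m - 1) / (1 + (u - 1) / t * f j ^ (m - 1))) / t ^ 2 := by
            rw [e1]; ring
    rwa [hkey] at h2
  have hZ : HasDerivAt Z (∑ j, N j t * fhat j / t ^ 2) t :=
    HasDerivAt.fun_sum (fun j _ => hN j)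
  have hdiv := (hN i).div hZ hZpos.ne'
  refine hdiv.congr_deriv (Eq.symm ?_)
  simp only [p, Finset.sum_div]
  rw [← Finset.sum_div]
  have hsum : ∀ j, N j t / Z t * fhat j = N j t * fhat j / Z t := fun j => by ring
  simp only [hsum]
  rw [← Finset.sum_div]
  field_simp
end

section
/- For any subset A of energy indices, with p_A = Σ_{i∈A} p_i and f̂_A^{m-1} = (Σ_{i∈A} p_i f̂_i^{m-1})/p_A, the derivative of the aggregated probability satisfies ∂p_A/∂t = (p_A/t²)(f̂_A^{m-1} - ⟨f̂^{m-1}⟩), where ⟨f̂^{m-1}⟩ = Σ_{j=1}^W p_j f̂_j^{m-1}. That is, aggregated states satisfy the same scale-invariant differential equation as individual states. -/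
/-- For any subset `A` of energy indices, with `p_A = Σ_{i∈A} p_i`
and `f̂_A^{m-1}` the conditional mean of the transformed energy over `A`, the
aggregated probability satisfies the same scale-invariant differential equation
as individual states: `∂p_A/∂t = (p_A/t²)(f̂_A^{m-1} - ⟨f̂^{m-1}⟩)`. -/
theorem deriv_aggregated_prob {W : ℕ} (u t m : ℝ) (hu : u ≠ 1) (ht : 0 < t)
    (hm : 1 < m) (f : Fin W → ℝ) (hf : ∀ j, 0 ≤ f j)
    (hpos : ∀ j, 0 < 1 + ((u - 1) / t) * f j ^ (m - 1))
    (A : Finset (Fin W)) (hA : A.Nonempty) :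
    let N : Fin W → ℝ → ℝ :=
      fun j s => (1 + ((u - 1) / s) * f j ^ (m - 1)) ^ (1 / (1 - u))
    let Z : ℝ → ℝ := fun s => ∑ j, N j s
    let p : Fin W → ℝ := fun j => N j t / Z t
    let fhat : Fin W → ℝ := fun j => f j ^ (m - 1) / (1 + ((u - 1) / t) * f j ^ (m - 1))
    let pA : ℝ := ∑ i ∈ A, p i
    let fhatA : ℝ := (∑ i ∈ A, p i * fhat i) / pA
    0 < pA →
    HasDerivAt (fun s : ℝ => ∑ i ∈ A, N i s / Z s)
      (pA / t ^ 2 * (fhatA - ∑ j, p j * fhat j)) t := by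
  intro N Z p fhat pA fhatA hpA
  have ht0 : t ≠ 0 := ht.ne'
  have h1u : (1 : ℝ) - u ≠ 0 := sub_ne_zero.mpr (Ne.symm hu)
  -- derivative of each N j
  have hderivN : ∀ j, HasDerivAt (fun s => N j s) (N j t * fhat j / t ^ 2) t := by
    intro j
    set cj : ℝ := f j ^ (m - 1) with hcj
    have hfun : (fun s : ℝ => 1 + (u - 1) * cj * s⁻¹)
        = fun s : ℝ => 1 + ((u - 1) / s) * cj := by
      funext s; ring
    have hg : HasDerivAt (fun s : ℝ => 1 + ((u - 1) / s) * cj)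
        ((u - 1) * cj * -(t ^ 2)⁻¹) t := by
      have h := ((hasDerivAt_inv ht0).const_mul ((u - 1) * cj)).const_add 1
      rwa [hfun] at h
    have hgt : (1 + ((u - 1) / t) * cj) ≠ 0 := (hpos j).ne'
    have h2 := hg.rpow_const (p := 1 / (1 - u)) (Or.inl hgt)
    convert h2 using 1
    have hN : N j t = (1 + ((u - 1) / t) * cj) ^ (1 / (1 - u)) := rfl
    rw [hN, Real.rpow_sub_one hgt]
    set g : ℝ := 1 + (u - 1) / t * cj with hgdef
    set G : ℝ := g ^ (1 / (1 - u)) with hGdef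
    show G * (cj / g) / t ^ 2 = (u - 1) * cj * -(t ^ 2)⁻¹ * (1 / (1 - u)) * (G / g)
    field_simp
    ring
  have hZpos : 0 < Z t := by
    obtain ⟨i0, _⟩ := hA
    exact Finset.sum_pos (fun j _ => Real.rpow_pos_of_pos (hpos j) _) ⟨i0, Finset.mem_univ i0⟩
  have hZ' : HasDerivAt Z (∑ j, N j t * fhat j / t ^ 2) t :=
    HasDerivAt.fun_sum fun j _ => hderivN j
  have hSA : HasDerivAt (fun s => ∑ i ∈ A, N i s) (∑ i ∈ A, N i t * fhat i / t ^ 2) t :=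
    HasDerivAt.fun_sum fun i _ => hderivN i
  have hdiv := hSA.div hZ' hZpos.ne'
  have hfun2 : (fun s : ℝ => ∑ i ∈ A, N i s / Z s)
      = fun s : ℝ => (∑ i ∈ A, N i s) / Z s := by
    funext s; rw [Finset.sum_div]
  rw [hfun2]
  convert hdiv using 1
  case e'_4 => rfl
  case e'_5 => rfl
  case e'_8 => rfl
  -- algebraic identity for the derivative value
  have hpAeq : pA = (∑ i ∈ A, N i t) / Z t := by
    simp only [pA, p, Finset.sum_div]
  have hfA : pA * fhatA = (∑ i ∈ A, N i t * fhat i) / Z t := by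
    have : pA * fhatA = ∑ i ∈ A, p i * fhat i := by
      simp only [fhatA]; rw [mul_div_cancel₀ _ hpA.ne']
    rw [this]
    simp only [p, div_mul_eq_mul_div, Finset.sum_div]
  have hmean : (∑ j, p j * fhat j) = (∑ j, N j t * fhat j) / Z t := by
    simp only [p, div_mul_eq_mul_div, Finset.sum_div]
  have hS1 : (∑ i ∈ A, N i t * fhat i / t ^ 2) = (∑ i ∈ A, N i t * fhat i) / t ^ 2 := by
    rw [Finset.sum_div]
  have hS2 : (∑ j, N j t * fhat j / t ^ 2) = (∑ j, N j t * fhat j) / t ^ 2 := by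
    rw [Finset.sum_div]
  rw [mul_sub, hS1, hS2, hmean, div_mul_eq_mul_div, hfA, hpAeq]
  field_simp
end

section
/- The expectation ⟨f̂^{m-1}⟩(t) = Σ_i p_i(t) f̂_i^{m-1}(t) satisfies ∂⟨f̂^{m-1}⟩/∂t = (⟨f̂^{2m-2}⟩ - ⟨f̂^{m-1}⟩² + (u-1)⟨f̂^{2m-2}⟩)/t², where ⟨f̂^{2m-2}⟩ = Σ_i p_i (f̂_i^{m-1})². -/
set_option maxHeartbeats 1000000


/-- The expectation `⟨f̂^{m-1}⟩(t) = Σ_i p_i(t) f̂_i^{m-1}(t)` satisfies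
`∂⟨f̂^{m-1}⟩/∂t = (⟨f̂^{2m-2}⟩ - ⟨f̂^{m-1}⟩² + (u-1)⟨f̂^{2m-2}⟩)/t²`. -/
theorem deriv_expectation_fhat {W : ℕ} (u t m : ℝ) (hu : u ≠ 1) (ht : 0 < t)
    (hm : 1 < m) (f : Fin W → ℝ) (hf : ∀ j, 0 ≤ f j)
    (hpos : ∀ j, 0 < 1 + ((u - 1) / t) * f j ^ (m - 1)) :
    let N : Fin W → ℝ → ℝ :=
      fun j s => (1 + ((u - 1) / s) * f j ^ (m - 1)) ^ (1 / (1 - u))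
    let Z : ℝ → ℝ := fun s => ∑ j, N j s
    let p : Fin W → ℝ := fun j => N j t / Z t
    let fhat : Fin W → ℝ := fun j => f j ^ (m - 1) / (1 + ((u - 1) / t) * f j ^ (m - 1))
    HasDerivAt
      (fun s : ℝ => ∑ i, (N i s / Z s) *
        (f i ^ (m - 1) / (1 + ((u - 1) / s) * f i ^ (m - 1))))
      (((∑ i, p i * fhat i ^ 2) - (∑ i, p i * fhat i) ^ 2 +
          (u - 1) * ∑ i, p i * fhat i ^ 2) / t ^ 2) t := by
  intro N Z p fhat
  have hu' : (1 : ℝ) - u ≠ 0 := sub_ne_zero.mpr (Ne.symm hu)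
  have ht' : t ≠ 0 := ht.ne'
  -- derivative of the inner function B_j(s) = 1 + ((u-1)/s) * c_j
  have h1 : HasDerivAt (fun s : ℝ => (u - 1) / s) (-((u - 1) / t ^ 2)) t := by
    have := (hasDerivAt_inv ht').const_mul (u - 1)
    simpa [div_eq_mul_inv, mul_neg] using this
  have hB : ∀ j, HasDerivAt (fun s : ℝ => 1 + ((u - 1) / s) * f j ^ (m - 1))
      (-((u - 1) / t ^ 2) * f j ^ (m - 1)) t := fun j =>
    ((h1.mul_const (f j ^ (m - 1))).const_add 1)
  -- derivative of N_j
  have hN : ∀ j, HasDerivAt (fun s => N j s) (N j t * fhat j / t ^ 2) t := by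
    intro j
    have h2 := (hB j).rpow_const (p := 1 / (1 - u)) (Or.inl (hpos j).ne')
    convert h2 using 1
    show N j t * fhat j / t ^ 2 = _
    simp only [N, fhat]
    set b := 1 + (u - 1) / t * f j ^ (m - 1) with hb
    have hb0 : 0 < b := hpos j
    rw [Real.rpow_sub hb0, Real.rpow_one]
    set A := b ^ (1 / (1 - u)) with hA
    field_simp
    ring
  -- derivative of fhat_j as a function of s
  have hg : ∀ j, HasDerivAt
      (fun s : ℝ => f j ^ (m - 1) / (1 + ((u - 1) / s) * f j ^ (m - 1)))
      ((u - 1) * fhat j ^ 2 / t ^ 2) t := by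
    intro j
    have h2 := (hasDerivAt_const t (f j ^ (m - 1))).fun_div (hB j) (hpos j).ne'
    refine h2.congr_deriv (Eq.symm ?_)
    show (u - 1) * fhat j ^ 2 / t ^ 2 = _
    simp only [fhat]
    set b := 1 + (u - 1) / t * f j ^ (m - 1) with hb
    have hb0 : 0 < b := hpos j
    field_simp
    ring
  -- derivative of Z
  have hZ : HasDerivAt Z ((∑ j, N j t * fhat j) / t ^ 2) t := by
    rw [Finset.sum_div]
    exact HasDerivAt.fun_sum fun j _ => hN j
  rcases Nat.eq_zero_or_pos W with hW | hW
  · -- empty case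
    have : IsEmpty (Fin W) := by rw [hW]; infer_instance
    simpa using hasDerivAt_const t (0 : ℝ)
  have hZt : 0 < Z t := by
    have : Nonempty (Fin W) := ⟨⟨0, hW⟩⟩
    exact Finset.sum_pos (fun j _ => Real.rpow_pos_of_pos (hpos j) _) Finset.univ_nonempty
  -- derivative of each summand
  set Zt := Z t with hZtdef
  set S1 := ∑ j, N j t * fhat j with hS1
  have hD : ∀ i, HasDerivAt
      (fun s : ℝ => (N i s / Z s) * (f i ^ (m - 1) / (1 + ((u - 1) / s) * f i ^ (m - 1))))
      ((1 / (Zt * t ^ 2) + (u - 1) / (Zt * t ^ 2)) * (N i t * fhat i ^ 2)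
        - S1 / (Zt ^ 2 * t ^ 2) * (N i t * fhat i)) t := by
    intro i
    have h2 := ((hN i).fun_div hZ hZt.ne').fun_mul (hg i)
    refine h2.congr_deriv (Eq.symm ?_)
    have hfi : f i ^ (m - 1) / (1 + ((u - 1) / t) * f i ^ (m - 1)) = fhat i := rfl
    rw [hfi, ← hZtdef]
    field_simp
    ring
  have hsum := HasDerivAt.fun_sum (fun i (_ : i ∈ Finset.univ) => hD i)
  refine hsum.congr_deriv (Eq.symm ?_)
  rw [Finset.sum_sub_distrib, ← Finset.mul_sum, ← Finset.mul_sum]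
  have h1' : ∑ i, p i * fhat i = S1 / Zt := by
    rw [hS1, Finset.sum_div]
    exact Finset.sum_congr rfl fun i _ => (div_mul_eq_mul_div _ _ _)
  have h2' : ∑ i, p i * fhat i ^ 2 = (∑ i, N i t * fhat i ^ 2) / Zt := by
    rw [Finset.sum_div]
    exact Finset.sum_congr rfl fun i _ => (div_mul_eq_mul_div _ _ _)
  rw [h1', h2']
  field_simp
  ring
end

section
/- For any subset A of indices with p_A > 0, the conditional mean f̂_A^{m-1} = (Σ_{i∈A} p_i f̂_i^{m-1})/p_A satisfies ∂f̂_A^{m-1}/∂t = (⟨f̂^{2m-2}⟩_A - (⟨f̂^{m-1}⟩_A)² + (u-1)⟨f̂^{2m-2}⟩_A)/t², where ⟨·⟩_A denotes the p-conditional expectation over A. -/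
open Filter Topology Finset

theorem helper_deriv {W : ℕ} (u t : ℝ) (hu : u ≠ 1) (ht : 0 < t)
    (c : Fin W → ℝ) (hpos : ∀ j, 0 < 1 + ((u - 1) / t) * c j)
    (A : Finset (Fin W)) (hA : A.Nonempty) (D : ℝ)
    (hD : D = (u * (∑ i ∈ A, (1 + ((u - 1) / t) * c i) ^ (1 / (1 - u)) *
                      (c i / (1 + ((u - 1) / t) * c i)) ^ 2) *
                 (∑ i ∈ A, (1 + ((u - 1) / t) * c i) ^ (1 / (1 - u))) -
               (∑ i ∈ A, (1 + ((u - 1) / t) * c i) ^ (1 / (1 - u)) *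
                   (c i / (1 + ((u - 1) / t) * c i))) ^ 2) /
          ((∑ i ∈ A, (1 + ((u - 1) / t) * c i) ^ (1 / (1 - u))) ^ 2 * t ^ 2)) :
    HasDerivAt (fun s : ℝ =>
        (∑ i ∈ A, ((1 + ((u - 1) / s) * c i) ^ (1 / (1 - u)) /
              (∑ j, (1 + ((u - 1) / s) * c j) ^ (1 / (1 - u)))) *
            (c i / (1 + ((u - 1) / s) * c i))) /
        (∑ i ∈ A, (1 + ((u - 1) / s) * c i) ^ (1 / (1 - u)) /
            (∑ j, (1 + ((u - 1) / s) * c j) ^ (1 / (1 - u)))))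
      D t := by
  have htne : t ≠ 0 := ne_of_gt ht
  have h1u : (1 : ℝ) - u ≠ 0 := sub_ne_zero.mpr (Ne.symm hu)
  haveI : Nonempty (Fin W) := ⟨hA.choose⟩
  -- derivative of g j
  have hg' : ∀ j, HasDerivAt (fun s : ℝ => 1 + ((u - 1) / s) * c j)
      (-((u - 1) * c j) / t ^ 2) t := by
    intro j
    have h2 := (((hasDerivAt_inv htne).const_mul (u - 1)).mul_const (c j)).const_add 1
    have he : -((u - 1) * c j) / t ^ 2 = (u - 1) * -(t ^ 2)⁻¹ * c j := by
      field_simp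
    rw [he]
    simpa [div_eq_mul_inv] using h2
  -- derivative of N j
  have hN' : ∀ j, HasDerivAt (fun s : ℝ => (1 + ((u - 1) / s) * c j) ^ (1 / (1 - u)))
      ((1 + ((u - 1) / t) * c j) ^ (1 / (1 - u)) *
        (c j / (1 + ((u - 1) / t) * c j)) / t ^ 2) t := by
    intro j
    have h2 := (hg' j).rpow_const (p := 1 / (1 - u)) (Or.inl (ne_of_gt (hpos j)))
    have h3 : (1 + ((u - 1) / t) * c j) ^ (1 / (1 - u) - 1)
        = (1 + ((u - 1) / t) * c j) ^ (1 / (1 - u)) / (1 + ((u - 1) / t) * c j) := by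
      rw [Real.rpow_sub (hpos j), Real.rpow_one]
    rw [h3] at h2
    have k : -((u - 1) * c j) / t ^ 2 * (1 / (1 - u)) = c j / t ^ 2 := by
      field_simp
      ring
    convert h2 using 1
    rw [k]
    ring
  -- derivative of h j
  have hh' : ∀ j, HasDerivAt (fun s : ℝ => c j / (1 + ((u - 1) / s) * c j))
      ((u - 1) * (c j / (1 + ((u - 1) / t) * c j)) ^ 2 / t ^ 2) t := by
    intro j
    have h2 := ((hg' j).inv (ne_of_gt (hpos j))).const_mul (c j)
    have he : (u - 1) * (c j / (1 + ((u - 1) / t) * c j)) ^ 2 / t ^ 2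
        = c j * (-(-((u - 1) * c j) / t ^ 2) / (1 + ((u - 1) / t) * c j) ^ 2) := by
      rw [div_pow]
      ring
    rw [he]
    simpa [div_eq_mul_inv] using h2
  -- numerator and denominator derivatives
  have hNum : HasDerivAt (fun s : ℝ => ∑ i ∈ A,
      (1 + ((u - 1) / s) * c i) ^ (1 / (1 - u)) * (c i / (1 + ((u - 1) / s) * c i)))
      (∑ i ∈ A, ((1 + ((u - 1) / t) * c i) ^ (1 / (1 - u)) *
          (c i / (1 + ((u - 1) / t) * c i)) / t ^ 2 * (c i / (1 + ((u - 1) / t) * c i)) +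
        (1 + ((u - 1) / t) * c i) ^ (1 / (1 - u)) *
          ((u - 1) * (c i / (1 + ((u - 1) / t) * c i)) ^ 2 / t ^ 2))) t :=
    HasDerivAt.fun_sum (fun i _ => (hN' i).mul (hh' i))
  have hDen : HasDerivAt (fun s : ℝ => ∑ i ∈ A,
      (1 + ((u - 1) / s) * c i) ^ (1 / (1 - u)))
      (∑ i ∈ A, (1 + ((u - 1) / t) * c i) ^ (1 / (1 - u)) *
          (c i / (1 + ((u - 1) / t) * c i)) / t ^ 2) t :=
    HasDerivAt.fun_sum (fun i _ => hN' i)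
  have hS0 : 0 < ∑ i ∈ A, (1 + ((u - 1) / t) * c i) ^ (1 / (1 - u)) :=
    Finset.sum_pos (fun i _ => Real.rpow_pos_of_pos (hpos i) _) hA
  have hQ := hNum.div hDen (ne_of_gt hS0)
  -- clean up derivative sums
  have e1 : (∑ i ∈ A, ((1 + ((u - 1) / t) * c i) ^ (1 / (1 - u)) *
          (c i / (1 + ((u - 1) / t) * c i)) / t ^ 2 * (c i / (1 + ((u - 1) / t) * c i)) +
        (1 + ((u - 1) / t) * c i) ^ (1 / (1 - u)) *
          ((u - 1) * (c i / (1 + ((u - 1) / t) * c i)) ^ 2 / t ^ 2)))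
      = u * (∑ i ∈ A, (1 + ((u - 1) / t) * c i) ^ (1 / (1 - u)) *
          (c i / (1 + ((u - 1) / t) * c i)) ^ 2) / t ^ 2 := by
    rw [Finset.mul_sum, Finset.sum_div]
    exact Finset.sum_congr rfl fun i _ => by ring
  have e2 : (∑ i ∈ A, (1 + ((u - 1) / t) * c i) ^ (1 / (1 - u)) *
          (c i / (1 + ((u - 1) / t) * c i)) / t ^ 2)
      = (∑ i ∈ A, (1 + ((u - 1) / t) * c i) ^ (1 / (1 - u)) *
          (c i / (1 + ((u - 1) / t) * c i))) / t ^ 2 := by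
    rw [Finset.sum_div]
  rw [e1, e2] at hQ
  beta_reduce at hQ
  -- eventual equality of the two functions
  have hev : ∀ᶠ s in 𝓝 t, ∀ j, 0 < 1 + ((u - 1) / s) * c j := by
    rw [Filter.eventually_all]
    intro j
    have hcont : ContinuousAt (fun s : ℝ => 1 + ((u - 1) / s) * c j) t :=
      continuousAt_const.add ((continuousAt_const.div continuousAt_id htne).mul
        continuousAt_const)
    exact hcont.eventually_mem (isOpen_Ioi.mem_nhds (hpos j))
  have hfeq : (fun s : ℝ =>
        (∑ i ∈ A, ((1 + ((u - 1) / s) * c i) ^ (1 / (1 - u)) /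
              (∑ j, (1 + ((u - 1) / s) * c j) ^ (1 / (1 - u)))) *
            (c i / (1 + ((u - 1) / s) * c i))) /
        (∑ i ∈ A, (1 + ((u - 1) / s) * c i) ^ (1 / (1 - u)) /
            (∑ j, (1 + ((u - 1) / s) * c j) ^ (1 / (1 - u)))))
      =ᶠ[𝓝 t] (fun s : ℝ =>
        (∑ i ∈ A, (1 + ((u - 1) / s) * c i) ^ (1 / (1 - u)) *
            (c i / (1 + ((u - 1) / s) * c i))) /
        (∑ i ∈ A, (1 + ((u - 1) / s) * c i) ^ (1 / (1 - u)))) := by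
    filter_upwards [hev] with s hs
    have hZ : 0 < ∑ j, (1 + ((u - 1) / s) * c j) ^ (1 / (1 - u)) :=
      Finset.sum_pos (fun j _ => Real.rpow_pos_of_pos (hs j) _) Finset.univ_nonempty
    have hDs : 0 < ∑ i ∈ A, (1 + ((u - 1) / s) * c i) ^ (1 / (1 - u)) :=
      Finset.sum_pos (fun i _ => Real.rpow_pos_of_pos (hs i) _) hA
    have eN : (∑ i ∈ A, ((1 + ((u - 1) / s) * c i) ^ (1 / (1 - u)) /
              (∑ j, (1 + ((u - 1) / s) * c j) ^ (1 / (1 - u)))) *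
            (c i / (1 + ((u - 1) / s) * c i)))
        = (∑ i ∈ A, (1 + ((u - 1) / s) * c i) ^ (1 / (1 - u)) *
            (c i / (1 + ((u - 1) / s) * c i))) /
          (∑ j, (1 + ((u - 1) / s) * c j) ^ (1 / (1 - u))) := by
      rw [Finset.sum_div]
      exact Finset.sum_congr rfl fun i _ => div_mul_eq_mul_div _ _ _
    have eD : (∑ i ∈ A, (1 + ((u - 1) / s) * c i) ^ (1 / (1 - u)) /
            (∑ j, (1 + ((u - 1) / s) * c j) ^ (1 / (1 - u))))
        = (∑ i ∈ A, (1 + ((u - 1) / s) * c i) ^ (1 / (1 - u))) /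
          (∑ j, (1 + ((u - 1) / s) * c j) ^ (1 / (1 - u))) := by
      rw [Finset.sum_div]
    rw [eN, eD, div_div_div_cancel_right₀]
    exact ne_of_gt hZ
  refine HasDerivAt.congr_of_eventuallyEq ?_ hfeq
  refine hQ.congr_deriv ?_
  rw [hD]
  field_simp

/-- For any subset `A` with `p_A > 0`, the conditional mean
`f̂_A^{m-1} = (Σ_{i∈A} p_i f̂_i^{m-1})/p_A` satisfies
`∂f̂_A^{m-1}/∂t = (⟨f̂^{2m-2}⟩_A - (⟨f̂^{m-1}⟩_A)² + (u-1)⟨f̂^{2m-2}⟩_A)/t²`. -/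
theorem deriv_conditional_mean_fhat {W : ℕ} (u t m : ℝ) (hu : u ≠ 1) (ht : 0 < t)
    (hm : 1 < m) (f : Fin W → ℝ) (hf : ∀ j, 0 ≤ f j)
    (hpos : ∀ j, 0 < 1 + ((u - 1) / t) * f j ^ (m - 1))
    (A : Finset (Fin W)) (hA : A.Nonempty) :
    let N : Fin W → ℝ → ℝ :=
      fun j s => (1 + ((u - 1) / s) * f j ^ (m - 1)) ^ (1 / (1 - u))
    let Z : ℝ → ℝ := fun s => ∑ j, N j s
    let p : Fin W → ℝ := fun j => N j t / Z t
    let fhat : Fin W → ℝ := fun j => f j ^ (m - 1) / (1 + ((u - 1) / t) * f j ^ (m - 1))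
    let pA : ℝ := ∑ i ∈ A, p i
    0 < pA →
    HasDerivAt
      (fun s : ℝ => (∑ i ∈ A, (N i s / Z s) *
          (f i ^ (m - 1) / (1 + ((u - 1) / s) * f i ^ (m - 1)))) /
        (∑ i ∈ A, N i s / Z s))
      ((((∑ i ∈ A, p i * fhat i ^ 2) / pA) - ((∑ i ∈ A, p i * fhat i) / pA) ^ 2 +
          (u - 1) * ((∑ i ∈ A, p i * fhat i ^ 2) / pA)) / t ^ 2) t := by
  intro N Z p fhat pA hpA
  have htne : t ≠ 0 := ne_of_gt ht
  haveI : Nonempty (Fin W) := ⟨hA.choose⟩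
  unfold pA p fhat N Z
  refine helper_deriv u t hu ht (fun j => f j ^ (m - 1)) hpos A hA _ ?_
  beta_reduce
  have hZ : 0 < ∑ j, (1 + ((u - 1) / t) * f j ^ (m - 1)) ^ (1 / (1 - u)) :=
    Finset.sum_pos (fun j _ => Real.rpow_pos_of_pos (hpos j) _) Finset.univ_nonempty
  have hS0 : 0 < ∑ i ∈ A, (1 + ((u - 1) / t) * f i ^ (m - 1)) ^ (1 / (1 - u)) :=
    Finset.sum_pos (fun i _ => Real.rpow_pos_of_pos (hpos i) _) hA
  have e1 : (∑ i ∈ A, (1 + ((u - 1) / t) * f i ^ (m - 1)) ^ (1 / (1 - u)) /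
        (∑ j, (1 + ((u - 1) / t) * f j ^ (m - 1)) ^ (1 / (1 - u))) *
        (f i ^ (m - 1) / (1 + ((u - 1) / t) * f i ^ (m - 1))) ^ 2)
      = (∑ i ∈ A, (1 + ((u - 1) / t) * f i ^ (m - 1)) ^ (1 / (1 - u)) *
          (f i ^ (m - 1) / (1 + ((u - 1) / t) * f i ^ (m - 1))) ^ 2) /
        (∑ j, (1 + ((u - 1) / t) * f j ^ (m - 1)) ^ (1 / (1 - u))) := by
    rw [Finset.sum_div]
    exact Finset.sum_congr rfl fun i _ => div_mul_eq_mul_div _ _ _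
  have e2 : (∑ i ∈ A, (1 + ((u - 1) / t) * f i ^ (m - 1)) ^ (1 / (1 - u)) /
        (∑ j, (1 + ((u - 1) / t) * f j ^ (m - 1)) ^ (1 / (1 - u))) *
        (f i ^ (m - 1) / (1 + ((u - 1) / t) * f i ^ (m - 1))))
      = (∑ i ∈ A, (1 + ((u - 1) / t) * f i ^ (m - 1)) ^ (1 / (1 - u)) *
          (f i ^ (m - 1) / (1 + ((u - 1) / t) * f i ^ (m - 1)))) /
        (∑ j, (1 + ((u - 1) / t) * f j ^ (m - 1)) ^ (1 / (1 - u))) := by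
    rw [Finset.sum_div]
    exact Finset.sum_congr rfl fun i _ => div_mul_eq_mul_div _ _ _
  have e3 : (∑ i ∈ A, (1 + ((u - 1) / t) * f i ^ (m - 1)) ^ (1 / (1 - u)) /
        (∑ j, (1 + ((u - 1) / t) * f j ^ (m - 1)) ^ (1 / (1 - u))))
      = (∑ i ∈ A, (1 + ((u - 1) / t) * f i ^ (m - 1)) ^ (1 / (1 - u))) /
        (∑ j, (1 + ((u - 1) / t) * f j ^ (m - 1)) ^ (1 / (1 - u))) :=
    (Finset.sum_div _ _ _).symm
  rw [e1, e2, e3]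
  have e4 : ∀ X : ℝ, X / (∑ j, (1 + ((u - 1) / t) * f j ^ (m - 1)) ^ (1 / (1 - u))) /
      ((∑ i ∈ A, (1 + ((u - 1) / t) * f i ^ (m - 1)) ^ (1 / (1 - u))) /
        (∑ j, (1 + ((u - 1) / t) * f j ^ (m - 1)) ^ (1 / (1 - u))))
      = X / (∑ i ∈ A, (1 + ((u - 1) / t) * f i ^ (m - 1)) ^ (1 / (1 - u))) := by
    intro X
    rw [div_div_div_cancel_right₀]
    exact ne_of_gt hZ
  simp only [e4]
  have key : ∀ S0 S1 S2 : ℝ, S0 ≠ 0 →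
      (S2 / S0 - (S1 / S0) ^ 2 + (u - 1) * (S2 / S0)) / t ^ 2
        = (u * S2 * S0 - S1 ^ 2) / (S0 ^ 2 * t ^ 2) := by
    intro S0 S1 S2 h0
    field_simp
    ring
  exact key _ _ _ (ne_of_gt hS0)
end
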